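/- The flattening conjecture is false: for every n > 4 that is a power of 2, there exist 2n probability distributions q_1,...,q_{2n} on [n], pairwise separated in ℓ1-distance by at most 2, such that for every left-stochastic matrix φ ∈ ℝ^{m×n} with the property that every entry of each φq_j lies in [0, 2/m], there exist indices j ≠ j' with ‖φq_j − φq_{j'}‖₁ ≤ 2/√n but ‖q_j − q_{j'}‖₁ ≥ 1. Concretely, one may take the point masses e_1,...,e_n together with f_1 := 1/n (uniform) and f_j := column j of the Hadamard matrix H with −1 replaced by 0 and +1 replaced by 2/n (for j = 2,...,n). -/

import Mathlib

noncomputable section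
namespace Stmt18Aux

/-- sign of an element of `ZMod 2`: `0 ↦ 1`, `1 ↦ -1`. -/
def sgn (a : ZMod 2) : ℝ := if a = 0 then 1 else -1

lemma sgn_add (a b : ZMod 2) : sgn (a + b) = sgn a * sgn b := by
  rcases (show ∀ u : ZMod 2, u = 0 ∨ u = 1 by decide) a with rfl | rfl <;> rcases (show ∀ u : ZMod 2, u = 0 ∨ u = 1 by decide) b with rfl | rfl <;> simp [sgn, show (1:ZMod 2)+1 = 0 from rfl]

lemma abs_sgn (a : ZMod 2) : |sgn a| = 1 := by
  rcases (show ∀ u : ZMod 2, u = 0 ∨ u = 1 by decide) a with rfl | rfl <;> simp [sgn]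

lemma neg_one_le_sgn (a : ZMod 2) : -1 ≤ sgn a := by
  rcases (show ∀ u : ZMod 2, u = 0 ∨ u = 1 by decide) a with rfl | rfl <;> simp [sgn]

lemma sgn_zero : sgn 0 = 1 := by simp [sgn]

lemma sgn_one : sgn 1 = -1 := by simp [sgn]

/-- bilinear form over `(ZMod 2)^d`. -/
def B {d : ℕ} (x y : Fin d → ZMod 2) : ZMod 2 := ∑ i, x i * y i

lemma B_comm {d : ℕ} (x y : Fin d → ZMod 2) : B x y = B y x := by
  simp [B, mul_comm]

lemma B_add_right {d : ℕ} (x y z : Fin d → ZMod 2) : B x (y + z) = B x y + B x z := by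
  simp [B, mul_add, Finset.sum_add_distrib]

lemma B_add_left {d : ℕ} (x y z : Fin d → ZMod 2) : B (x + y) z = B x z + B y z := by
  simp [B, add_mul, Finset.sum_add_distrib]

lemma pi_add_eq_zero_iff {d : ℕ} (a b : Fin d → ZMod 2) : a + b = 0 ↔ a = b := by
  have h : ∀ u v : ZMod 2, u + v = 0 ↔ u = v := by decide
  constructor
  · intro hab; funext i
    exact (h _ _).mp (congrFun hab i)
  · intro hab; funext i
    exact (h (a i) (b i)).mpr (congrFun hab i)

lemma sum_sgn_B_ne {d : ℕ} (z : Fin d → ZMod 2) (hz : z ≠ 0) :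
    ∑ j : Fin d → ZMod 2, sgn (B z j) = 0 := by
  obtain ⟨i, hi⟩ : ∃ i, z i ≠ 0 := by
    by_contra h; push_neg at h; exact hz (funext h)
  set e : Fin d → ZMod 2 := Pi.single i 1 with he
  have hBe : B z e = z i := by
    simp [B, he, Pi.single_apply, mul_ite]
  have hzi : z i = 1 := by
    revert hi; generalize z i = u; revert u; decide
  have key : ∀ j, sgn (B z (j + e)) = - sgn (B z j) := by
    intro j
    rw [B_add_right, sgn_add, hBe, hzi, sgn_one]; ring
  have h1 : ∑ j : Fin d → ZMod 2, sgn (B z j)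
      = ∑ j : Fin d → ZMod 2, sgn (B z (j + e)) :=
    (Equiv.sum_comp (Equiv.addRight e) (fun j => sgn (B z j))).symm
  simp only [key, Finset.sum_neg_distrib] at h1
  linarith

lemma sum_sgn_B_zero {d : ℕ} :
    ∑ j : Fin d → ZMod 2, sgn (B (0 : Fin d → ZMod 2) j) = 2^d := by
  have h : ∀ j : Fin d → ZMod 2, B (0 : Fin d → ZMod 2) j = 0 := by
    intro j; simp [B]
  simp [h, sgn_zero, Finset.card_univ, Fintype.card_fun]

def E (d : ℕ) : (Fin d → ZMod 2) ≃ Fin (2^d) :=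
  Fintype.equivFinOfCardEq (by simp [Fintype.card_fun])

lemma key_sum' {d : ℕ} (c : (Fin d → ZMod 2) → ℝ) :
    ∑ z : Fin d → ZMod 2, (∑ w, c w * sgn (B z w))^2 = 2^d * ∑ w, (c w)^2 := by
  have expand : ∀ z, (∑ w, c w * sgn (B z w))^2
      = ∑ w, ∑ w', (c w * c w') * sgn (B (w + w') z) := by
    intro z
    rw [sq, Finset.sum_mul_sum]
    refine Finset.sum_congr rfl fun w _ => Finset.sum_congr rfl fun w' _ => ?_
    rw [B_add_left, sgn_add, B_comm w z, B_comm w' z]; ring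
  simp only [expand]
  rw [Finset.sum_comm]
  have inner : ∀ w w' : Fin d → ZMod 2, ∑ z, (c w * c w') * sgn (B (w + w') z)
      = if w' = w then 2^d * (c w)^2 else 0 := by
    intro w w'
    rw [← Finset.mul_sum]
    by_cases h : w' = w
    · subst h
      have h0 : w' + w' = (0 : Fin d → ZMod 2) := (pi_add_eq_zero_iff _ _).mpr rfl
      rw [if_pos rfl, h0, sum_sgn_B_zero]; ring
    · have hne : w + w' ≠ 0 := fun hc => h ((pi_add_eq_zero_iff _ _).mp hc).symm
      rw [if_neg h, sum_sgn_B_ne _ hne, mul_zero]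
  calc ∑ w : Fin d → ZMod 2, ∑ z : Fin d → ZMod 2, ∑ w', (c w * c w') * sgn (B (w + w') z)
      = ∑ w : Fin d → ZMod 2, ∑ w', ∑ z, (c w * c w') * sgn (B (w + w') z) := by
        exact Finset.sum_congr rfl fun w _ => Finset.sum_comm
    _ = ∑ w : Fin d → ZMod 2, ∑ w', if w' = w then 2^d * (c w)^2 else 0 := by
        simp only [inner]
    _ = ∑ w : Fin d → ZMod 2, 2^d * (c w)^2 := by
        refine Finset.sum_congr rfl fun w _ => ?_
        rw [Finset.sum_ite_eq' Finset.univ w (fun _ => (2:ℝ)^d * (c w)^2),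
          if_pos (Finset.mem_univ w)]
    _ = 2^d * ∑ w, (c w)^2 := by rw [Finset.mul_sum]

lemma key_sum {d : ℕ} (r : Fin (2^d) → ℝ) :
    ∑ z : Fin d → ZMod 2, (∑ x, r x * sgn (B z ((E d).symm x)))^2
      = 2^d * ∑ x, (r x)^2 := by
  have h1 : ∀ z, ∑ x, r x * sgn (B z ((E d).symm x))
      = ∑ w, (r ((E d) w)) * sgn (B z w) := by
    intro z
    rw [← Equiv.sum_comp (E d) (fun x => r x * sgn (B z ((E d).symm x)))]
    simp
  simp only [h1]
  rw [key_sum' (fun w => r (E d w)),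
    Equiv.sum_comp (E d) (fun x => (r x)^2)]

def f (d : ℕ) (z : Fin d → ZMod 2) (x : Fin (2^d)) : ℝ :=
  if z = 0 then 1/2^d else (1 + sgn (B z ((E d).symm x)))/2^d

def q (d : ℕ) (j : Fin (2 * 2^d)) (x : Fin (2^d)) : ℝ :=
  if hj : (j : ℕ) < 2^d then (if x = ⟨j, hj⟩ then 1 else 0)
  else f d ((E d).symm ⟨(j:ℕ) - 2^d, by have := j.isLt; omega⟩) x

lemma q_lt (d : ℕ) (j : Fin (2*2^d)) (hj : (j:ℕ) < 2^d) (x : Fin (2^d)) :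
    q d j x = if x = ⟨j, hj⟩ then 1 else 0 := by rw [q, dif_pos hj]

lemma q_ge (d : ℕ) (j : Fin (2*2^d)) (hj : ¬ (j:ℕ) < 2^d) (x : Fin (2^d)) :
    q d j x = f d ((E d).symm ⟨(j:ℕ) - 2^d, by have := j.isLt; omega⟩) x := by
  rw [q, dif_neg hj]

lemma q_f (d : ℕ) (z : Fin d → ZMod 2)
    (h : 2^d + ((E d z : ℕ)) < 2 * 2^d) (x : Fin (2^d)) :
    q d ⟨2^d + (E d z : ℕ), h⟩ x = f d z x := by
  rw [q_ge d _ (by simp)]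
  congr 1
  rw [Equiv.symm_apply_eq]
  apply Fin.ext
  show (2^d + (E d z : ℕ)) - 2^d = (E d z : ℕ)
  omega

lemma f_sum (d : ℕ) (z : Fin d → ZMod 2) : ∑ x, f d z x = 1 := by
  by_cases h : z = 0
  · subst h; simp [f, Finset.card_univ]
  · simp only [f, if_neg h]
    rw [← Finset.sum_div, Finset.sum_add_distrib]
    have : ∑ x : Fin (2^d), sgn (B z ((E d).symm x))
        = ∑ w : Fin d → ZMod 2, sgn (B z w) :=
      Equiv.sum_comp (E d).symm (fun w => sgn (B z w))
    rw [this, sum_sgn_B_ne z h]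
    simp [Finset.card_univ]

lemma f_nonneg (d : ℕ) (z : Fin d → ZMod 2) (x : Fin (2^d)) : 0 ≤ f d z x := by
  by_cases h : z = 0
  · subst h; simp [f]
  · simp only [f, if_neg h]
    have := neg_one_le_sgn (B z ((E d).symm x))
    have h2 : (0:ℝ) < 2^d := by positivity
    have : (0:ℝ) ≤ 1 + sgn (B z ((E d).symm x)) := by linarith
    positivity

lemma q_nonneg (d : ℕ) (j : Fin (2*2^d)) (x : Fin (2^d)) : 0 ≤ q d j x := by
  by_cases hj : (j:ℕ) < 2^d
  · rw [q_lt d j hj]; split <;> norm_num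
  · rw [q_ge d j hj]; exact f_nonneg _ _ _

lemma q_sum (d : ℕ) (j : Fin (2*2^d)) : ∑ x, q d j x = 1 := by
  by_cases hj : (j:ℕ) < 2^d
  · simp only [q_lt d j hj]
    rw [Finset.sum_ite_eq' Finset.univ _ (fun _ => (1:ℝ)), if_pos (Finset.mem_univ _)]
  · simp only [q_ge d j hj]; exact f_sum _ _

end Stmt18Aux

open Stmt18Aux in
/-- The flattening conjecture is false: for every power of two `n > 4` there are
`2n` probability distributions on `[n]`, pairwise at ℓ1-distance at most `2`, such
that for every left-stochastic `φ ∈ ℝ^{m×n}` whose pushforwards `φ q_j` all have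
entries in `[0, 2/m]`, some pair `j ≠ j'` satisfies `‖φ q_j - φ q_{j'}‖₁ ≤ 2/√n`
although `‖q_j - q_{j'}‖₁ ≥ 1`. -/
theorem stmt_18 (n : ℕ) (hpow : ∃ d : ℕ, n = 2 ^ d) (hn : 4 < n) :
    ∃ q : Fin (2 * n) → Fin n → ℝ,
      (∀ j, (∀ x, 0 ≤ q j x) ∧ ∑ x, q j x = 1) ∧
      (∀ j j', ∑ x, |q j x - q j' x| ≤ 2) ∧
      ∀ m : ℕ, 0 < m → ∀ φ : Matrix (Fin m) (Fin n) ℝ,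
        (∀ i j, 0 ≤ φ i j) → (∀ j, ∑ i, φ i j = 1) →
        (∀ j : Fin (2 * n), ∀ i, φ.mulVec (q j) i ∈ Set.Icc (0 : ℝ) (2 / m)) →
        ∃ j j' : Fin (2 * n), j ≠ j' ∧
          (∑ i, |φ.mulVec (q j) i - φ.mulVec (q j') i| ≤ 2 / Real.sqrt n) ∧
          1 ≤ ∑ x, |q j x - q j' x| := by
  obtain ⟨d, rfl⟩ := hpow
  have hN5 : 5 ≤ 2^d := hn
  have hNR : (0:ℝ) < 2^d := by positivity
  refine ⟨q d, fun j => ⟨q_nonneg d j, q_sum d j⟩, ?_, ?_⟩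
  · intro j j'
    calc ∑ x, |q d j x - q d j' x| ≤ ∑ x, (q d j x + q d j' x) := by
          refine Finset.sum_le_sum fun x _ => ?_
          have h1 := q_nonneg d j x; have h2 := q_nonneg d j' x
          rw [abs_sub_le_iff]; constructor <;> linarith
      _ = 2 := by rw [Finset.sum_add_distrib, q_sum, q_sum]; norm_num
  · intro m hm φ hφ0 hcol hrange
    have hm' : (0:ℝ) < m := by exact_mod_cast hm
    -- entries of φ are bounded by 2/m
    have hent : ∀ i x, φ i x ≤ 2 / m := by
      intro i x
      have hx2 : (x:ℕ) < 2 * 2^d := by have := x.isLt; omega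
      have h := (hrange ⟨(x:ℕ), hx2⟩ i).2
      have hq : ∀ y, q d ⟨(x:ℕ), hx2⟩ y = if y = x then 1 else 0 := by
        intro y
        rw [q_lt d _ x.isLt]
      have heq : φ.mulVec (q d ⟨(x:ℕ), hx2⟩) i = φ i x := by
        simp only [Matrix.mulVec, dotProduct, hq, mul_ite, mul_one, mul_zero]
        rw [Finset.sum_ite_eq' Finset.univ x (fun y => φ i y), if_pos (Finset.mem_univ x)]
      rwa [heq] at h
    -- the V vectors
    set V : (Fin d → ZMod 2) → Fin m → ℝ :=
      fun z i => ∑ x, φ i x * sgn (B z ((E d).symm x)) with hV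
    have hVsum : ∑ z, ∑ i, (V z i)^2 = 2^d * ∑ i, ∑ x, (φ i x)^2 := by
      rw [Finset.sum_comm]
      have h1 : ∀ i, ∑ z, (V z i)^2 = 2^d * ∑ x, (φ i x)^2 :=
        fun i => key_sum (fun x => φ i x)
      rw [Finset.sum_congr rfl fun i _ => h1 i, ← Finset.mul_sum]
    have hfro : ∑ i, ∑ x, (φ i x)^2 ≤ 2/m * 2^d := by
      calc ∑ i, ∑ x, (φ i x)^2 ≤ ∑ i, ∑ x, (2/m) * φ i x := by
            refine Finset.sum_le_sum fun i _ => Finset.sum_le_sum fun x _ => ?_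
            rw [sq]
            exact mul_le_mul_of_nonneg_right (hent i x) (hφ0 i x)
        _ = 2/m * ∑ x, ∑ i, φ i x := by
            simp only [← Finset.mul_sum]
            rw [Finset.sum_comm]
        _ = 2/m * 2^d := by
            simp only [hcol, Finset.sum_const, Finset.card_univ, Fintype.card_fin,
              nsmul_eq_mul, mul_one]
            push_cast; ring
    -- pigeonhole over nonzero z
    set S : Finset (Fin d → ZMod 2) := Finset.univ.erase 0 with hS
    have hScard : S.card = 2^d - 1 := by
      rw [hS, Finset.card_erase_of_mem (Finset.mem_univ _), Finset.card_univ]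
      simp [Fintype.card_fun]
    have hSne : S.Nonempty := Finset.card_pos.mp (by rw [hScard]; omega)
    set c : ℝ := (2^d * (2/m * 2^d)) / ((2^d - 1 : ℕ) : ℝ) with hc
    have hcast0 : ((2^d - 1 : ℕ) : ℝ) ≠ 0 := Nat.cast_ne_zero.mpr (by omega)
    have hex : ∃ z ∈ S, ∑ i, (V z i)^2 ≤ c := by
      refine Finset.exists_le_of_sum_le hSne ?_
      rw [Finset.sum_const, hScard, nsmul_eq_mul, hc,
        mul_div_cancel₀ _ hcast0]
      calc ∑ z ∈ S, ∑ i, (V z i)^2 ≤ ∑ z, ∑ i, (V z i)^2 :=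
            Finset.sum_le_sum_of_subset_of_nonneg (Finset.subset_univ S)
              (fun z _ _ => by positivity)
        _ = 2^d * ∑ i, ∑ x, (φ i x)^2 := hVsum
        _ ≤ 2^d * (2/m * 2^d) := by
            exact mul_le_mul_of_nonneg_left hfro (le_of_lt hNR)
    obtain ⟨z₀, hz₀S, hz₀le⟩ := hex
    have hz₀ne : z₀ ≠ 0 := (Finset.mem_erase.mp hz₀S).1
    -- Cauchy-Schwarz
    set A : ℝ := ∑ i, |V z₀ i| with hA
    have hA0 : 0 ≤ A := Finset.sum_nonneg fun i _ => abs_nonneg _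
    have hCS : A^2 ≤ m * ∑ i, (V z₀ i)^2 := by
      have h := Finset.sum_mul_sq_le_sq_mul_sq Finset.univ
        (fun _ : Fin m => (1:ℝ)) (fun i => |V z₀ i|)
      simpa [Finset.card_univ, sq_abs, hA] using h
    have hcastK : ((2^d - 1 : ℕ) : ℝ) = 2^d - 1 := by
      rw [Nat.cast_sub (by omega : 1 ≤ 2^d)]; push_cast; ring
    have hmc : (m:ℝ) * c ≤ 4 * 2^d := by
      rw [hc, hcastK]
      have h5 : (5:ℝ) ≤ 2^d := by exact_mod_cast hN5
      have hK1 : (0:ℝ) < 2^d - 1 := by linarith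
      have hm0 : (m:ℝ) ≠ 0 := ne_of_gt hm'
      have heq : (m:ℝ) * (2^d * (2/m * 2^d) / (2^d - 1)) = 2 * (2^d)^2 / (2^d - 1) := by
        field_simp
      rw [heq, div_le_iff₀ hK1]
      nlinarith [hNR, hK1, h5]
    have hA2 : A^2 ≤ 4 * 2^d := by
      calc A^2 ≤ m * ∑ i, (V z₀ i)^2 := hCS
        _ ≤ m * c := mul_le_mul_of_nonneg_left hz₀le (le_of_lt hm')
        _ ≤ 4 * 2^d := hmc
    have hAle : A ≤ 2 * Real.sqrt (2^d) := by
      have h1 : A = Real.sqrt (A^2) := (Real.sqrt_sq hA0).symm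
      rw [h1]
      calc Real.sqrt (A^2) ≤ Real.sqrt (4 * 2^d) := Real.sqrt_le_sqrt hA2
        _ = 2 * Real.sqrt (2^d) := by
            rw [show (4:ℝ) * 2^d = 2^2 * 2^d by ring,
              Real.sqrt_mul (by positivity), Real.sqrt_sq (by norm_num)]
    -- the two indices
    have hj1 : 2^d + ((E d z₀ : ℕ)) < 2 * 2^d := by have := (E d z₀).isLt; omega
    have hj0 : 2^d + ((E d 0 : ℕ)) < 2 * 2^d := by have := (E d (0 : Fin d → ZMod 2)).isLt; omega
    refine ⟨⟨2^d + (E d z₀ : ℕ), hj1⟩, ⟨2^d + (E d 0 : ℕ), hj0⟩, ?_, ?_, ?_⟩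
    · intro h
      have hval := congrArg Fin.val h
      simp only at hval
      exact hz₀ne ((E d).injective (Fin.ext (by omega)))
    · -- the ℓ1 bound on pushforwards
      have hqdiff : ∀ x, q d ⟨2^d + (E d z₀ : ℕ), hj1⟩ x - q d ⟨2^d + (E d 0 : ℕ), hj0⟩ x
          = sgn (B z₀ ((E d).symm x)) / 2^d := by
        intro x
        rw [q_f d z₀ hj1 x, q_f d 0 hj0 x]
        simp [f, hz₀ne]
        ring
      have hmv : ∀ i, φ.mulVec (q d ⟨2^d + (E d z₀ : ℕ), hj1⟩) i
          - φ.mulVec (q d ⟨2^d + (E d 0 : ℕ), hj0⟩) i = V z₀ i / 2^d := by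
        intro i
        simp only [Matrix.mulVec, dotProduct]
        rw [← Finset.sum_sub_distrib]
        simp only [hV]
        rw [Finset.sum_div]
        refine Finset.sum_congr rfl fun x _ => ?_
        rw [← mul_sub, hqdiff x]; ring
      have habs : ∀ i, |φ.mulVec (q d ⟨2^d + (E d z₀ : ℕ), hj1⟩) i
          - φ.mulVec (q d ⟨2^d + (E d 0 : ℕ), hj0⟩) i| = |V z₀ i| / 2^d := by
        intro i; rw [hmv i, abs_div, abs_of_pos hNR]
      calc ∑ i, |φ.mulVec (q d ⟨2^d + (E d z₀ : ℕ), hj1⟩) i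
            - φ.mulVec (q d ⟨2^d + (E d 0 : ℕ), hj0⟩) i|
          = A / 2^d := by
            rw [Finset.sum_congr rfl fun i _ => habs i, ← Finset.sum_div]
        _ ≤ 2 / Real.sqrt ((2^d : ℕ) : ℝ) := by
            have hsq : Real.sqrt (((2^d:ℕ):ℝ)) = Real.sqrt ((2:ℝ)^d) := by push_cast; ring_nf
            rw [hsq, div_le_div_iff₀ hNR (Real.sqrt_pos.mpr hNR)]
            calc A * Real.sqrt (2^d) ≤ (2 * Real.sqrt (2^d)) * Real.sqrt (2^d) :=
                  mul_le_mul_of_nonneg_right hAle (Real.sqrt_nonneg _)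
              _ = 2 * 2^d := by
                  rw [mul_assoc, Real.mul_self_sqrt (le_of_lt hNR)]
    · -- the ℓ1 lower bound on the q's
      have hqdiff : ∀ x, q d ⟨2^d + (E d z₀ : ℕ), hj1⟩ x - q d ⟨2^d + (E d 0 : ℕ), hj0⟩ x
          = sgn (B z₀ ((E d).symm x)) / 2^d := by
        intro x
        rw [q_f d z₀ hj1 x, q_f d 0 hj0 x]
        simp [f, hz₀ne]
        ring
      have habs1 : ∀ x : Fin (2^d), |sgn (B z₀ ((E d).symm x)) / 2^d| = 1/2^d := by
        intro x; rw [abs_div, abs_sgn, abs_of_pos hNR]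
      rw [Finset.sum_congr rfl fun x _ => by rw [hqdiff x, habs1 x]]
      rw [Finset.sum_const, Finset.card_univ, Fintype.card_fin, nsmul_eq_mul]
      push_cast
      rw [mul_one_div, div_self (ne_of_gt hNR)]
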